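/- Let X be a standard Gaussian random variable (mean 0, variance 1). Then the conditional overshoot variance above a high level l satisfies lim_{l → ∞} l² · Var(X − l | X > l) = 1, where Var(X − l | X > l) = E[(X − l)² | X > l] − (E[X − l | X > l])², with conditional expectations defined as E[ψ(X) | X > l] = (∫_l^∞ ψ(y) φ(y) dy)/P(X > l) and φ the standard Gaussian density. In particular, the conditional variance of the overshoot is asymptotically l⁻². -/

import Mathlib

open MeasureTheory ProbabilityTheory Filter Real Set

noncomputable def gauG (y : ℝ) : ℝ := Real.exp (-(1/2) * y ^ 2)

lemma gauG_pos (y : ℝ) : 0 < gauG y := Real.exp_pos _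

lemma pdf_eq : gaussianPDFReal 0 1 = fun y => (Real.sqrt (2 * Real.pi))⁻¹ * gauG y := by
  funext y
  simp only [gaussianPDFReal, NNReal.coe_one, mul_one, sub_zero, gauG]
  congr 1
  ring

lemma integrable_gauG : Integrable gauG := by
  refine (integrable_exp_neg_mul_sq (by norm_num : (0:ℝ) < 1/2)).congr
    (Eventually.of_forall fun y => ?_)
  simp [gauG]

lemma integrable_mul_gauG : Integrable (fun y => y * gauG y) := by
  refine (integrable_mul_exp_neg_mul_sq (by norm_num : (0:ℝ) < 1/2)).congr
    (Eventually.of_forall fun y => ?_)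
  simp [gauG]

lemma integrable_sq_gauG : Integrable (fun y => y ^ 2 * gauG y) := by
  refine ((integrable_rpow_mul_exp_neg_mul_sq (by norm_num : (0:ℝ) < 1/2)
    (by norm_num : (-1:ℝ) < 2))).congr (Eventually.of_forall fun y => ?_)
  have : (y : ℝ) ^ (2:ℝ) = y ^ (2:ℕ) := by
    rw [show ((2:ℝ)) = ((2:ℕ):ℝ) by norm_num, Real.rpow_natCast]
  simp only [this, gauG]

lemma hasDerivAt_gauG (y : ℝ) : HasDerivAt gauG (-(y * gauG y)) y := by
  have h : HasDerivAt (fun y : ℝ => -(1/2) * y ^ 2) (-(1/2) * (2 * y ^ 1)) y :=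
    (hasDerivAt_pow 2 y).const_mul _
  have := h.exp
  refine this.congr_deriv ?_
  simp [gauG]; ring

lemma tendsto_gauG : Tendsto gauG atTop (nhds 0) := by
  have h1 : Tendsto (fun y : ℝ => -(1/2) * y ^ 2) atTop atBot := by
    apply Tendsto.const_mul_atTop_of_neg (by norm_num : (-(1/2):ℝ) < 0)
    exact tendsto_pow_atTop (by norm_num)
  exact Real.tendsto_exp_atBot.comp h1

lemma tendsto_mul_gauG : Tendsto (fun y => y * gauG y) atTop (nhds 0) := by
  have h := rpow_mul_exp_neg_mul_sq_isLittleO_exp_neg (by norm_num : (0:ℝ) < 1/2) 1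
  have h2 : Tendsto (fun x : ℝ => Real.exp (-(1/2) * x)) atTop (nhds 0) := by
    apply Real.tendsto_exp_atBot.comp
    apply Tendsto.const_mul_atTop_of_neg (by norm_num : (-(1/2):ℝ) < 0) tendsto_id
  have h3 := h.isBigO.trans_tendsto h2
  apply h3.congr'
  filter_upwards [eventually_gt_atTop (0:ℝ)] with y hy
  rw [Real.rpow_one]
  simp [gauG]

lemma integral_mul_gauG (l : ℝ) : ∫ y in Ioi l, y * gauG y = gauG l := by
  have h := integral_Ioi_of_hasDerivAt_of_tendsto' (f := fun y => -gauG y)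
    (f' := fun y => y * gauG y) (a := l) (m := 0)
    (fun x _ => (hasDerivAt_gauG x).neg.congr_deriv (by ring))
    integrable_mul_gauG.integrableOn (by simpa using tendsto_gauG.neg)
  simpa using h

lemma integral_sq_gauG (l : ℝ) :
    ∫ y in Ioi l, y ^ 2 * gauG y = l * gauG l + ∫ y in Ioi l, gauG y := by
  have hd : ∀ x : ℝ, HasDerivAt (fun y => -(y * gauG y)) (x ^ 2 * gauG x - gauG x) x := by
    intro x
    have := ((hasDerivAt_id x).mul (hasDerivAt_gauG x)).neg
    refine this.congr_deriv ?_
    simp only [id]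
    ring
  have h := integral_Ioi_of_hasDerivAt_of_tendsto' (a := l) (m := 0)
    (fun x _ => hd x)
    ((integrable_sq_gauG.sub integrable_gauG).integrableOn)
    (by simpa using tendsto_mul_gauG.neg)
  rw [integral_sub integrable_sq_gauG.integrableOn integrable_gauG.integrableOn] at h
  simp only [zero_sub, neg_neg] at h
  linarith

noncomputable def millsP (l : ℝ) : ℝ := 1/l - 1/l^3 + 3/l^5
noncomputable def millsQ (l : ℝ) : ℝ := 1/l - 1/l^3 + 3/l^5 - 15/l^7
noncomputable def upF (l : ℝ) : ℝ := l^2 * (1 + l * (millsP l)⁻¹ - ((millsP l)⁻¹)^2)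
noncomputable def loF (l : ℝ) : ℝ := l^2 * (1 + l * (millsQ l)⁻¹ - ((millsQ l)⁻¹)^2)

lemma hasDerivAt_inv_pow (n : ℕ) {y : ℝ} (hy : y ≠ 0) :
    HasDerivAt (fun y : ℝ => 1/y^n) (-(n : ℝ)/y^(n+1)) y := by
  have h := ((hasDerivAt_pow n y).inv (pow_ne_zero n hy))
  have e : ∀ x : ℝ, 1/x^n = (x^n)⁻¹ := fun x => one_div _
  simp_rw [e]
  refine h.congr_deriv ?_
  rw [div_eq_div_iff (by positivity) (by positivity)]
  rw [← pow_mul]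
  rcases n with _ | m
  · simp
  · simp only [Nat.add_sub_cancel]
    field_simp
    ring

lemma hasDerivAt_millsP {y : ℝ} (hy : y ≠ 0) :
    HasDerivAt millsP (-1/y^2 + 3/y^4 - 15/y^6) y := by
  have h := ((hasDerivAt_inv_pow 1 hy).sub (hasDerivAt_inv_pow 3 hy)).add
    ((hasDerivAt_inv_pow 5 hy).const_mul 3)
  have : millsP = fun y : ℝ => (1/y^1 - 1/y^3) + 3 * (1/y^5) := by
    funext x; simp [millsP]; ring
  rw [this]
  refine h.congr_deriv ?_
  norm_num
  ring

lemma hasDerivAt_millsQ {y : ℝ} (hy : y ≠ 0) :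
    HasDerivAt millsQ (-1/y^2 + 3/y^4 - 15/y^6 + 105/y^8) y := by
  have h := (hasDerivAt_millsP hy).sub ((hasDerivAt_inv_pow 7 hy).const_mul 15)
  have : millsQ = fun y : ℝ => millsP y - 15 * (1/y^7) := by
    funext x; simp [millsQ, millsP]; ring
  rw [this]
  refine h.congr_deriv ?_
  norm_num
  ring

lemma tendsto_millsP : Tendsto millsP atTop (nhds 0) := by
  have h : ∀ n : ℕ, 1 ≤ n → Tendsto (fun y : ℝ => 1/y^n) atTop (nhds 0) := by
    intro n hn
    have h1 : Tendsto (fun r : ℝ => r⁻¹) atTop (nhds 0) := tendsto_inv_atTop_zero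
    have := h1.comp (tendsto_pow_atTop (α := ℝ) (by omega : n ≠ 0))
    simpa [one_div, Function.comp_def] using this
  have := ((h 1 le_rfl).sub (h 3 (by norm_num))).add ((h 5 (by norm_num)).const_mul 3)
  simp only [sub_zero, mul_zero, add_zero] at this
  apply this.congr
  intro x; simp [millsP]; ring

lemma tendsto_millsQ : Tendsto millsQ atTop (nhds 0) := by
  have h : Tendsto (fun y : ℝ => 1/y^7) atTop (nhds 0) := by
    have h1 : Tendsto (fun r : ℝ => r⁻¹) atTop (nhds 0) := tendsto_inv_atTop_zero
    have := h1.comp (tendsto_pow_atTop (α := ℝ) (by norm_num : (7:ℕ) ≠ 0))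
    simpa [one_div, Function.comp_def] using this
  have := tendsto_millsP.sub (h.const_mul 15)
  simp only [mul_zero, sub_zero] at this
  apply this.congr
  intro x; simp [millsQ, millsP]; ring

lemma integrableOn_upperDeriv {l : ℝ} (hl : 2 ≤ l) :
    IntegrableOn (fun y : ℝ => gauG y * (1 + 15/y^6)) (Ioi l) := by
  apply Integrable.mono' ((integrable_gauG.const_mul 2).integrableOn)
  · apply Measurable.aestronglyMeasurable
    apply Measurable.mul (by unfold gauG; measurability)
    apply Measurable.add measurable_const
    exact (measurable_const.div (measurable_id.pow_const 6))
  · rw [ae_restrict_iff' measurableSet_Ioi]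
    filter_upwards with y hy
    have hy2 : (2:ℝ) ≤ y := le_trans hl (le_of_lt hy)
    have hy0 : (0:ℝ) < y := by linarith
    have h64 : (64:ℝ) ≤ y^6 := by
      calc (64:ℝ) = 2^6 := by norm_num
      _ ≤ y^6 := by gcongr
    have h15 : 15/y^6 ≤ 1 := by rw [div_le_one (by positivity)]; linarith
    have h0 : 0 ≤ 15/y^6 := by positivity
    rw [Real.norm_eq_abs, abs_of_nonneg (by nlinarith [gauG_pos y])]
    nlinarith [gauG_pos y]

lemma integrableOn_lowerDeriv {l : ℝ} (hl : 2 ≤ l) :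
    IntegrableOn (fun y : ℝ => gauG y * (1 - 105/y^8)) (Ioi l) := by
  apply Integrable.mono' ((integrable_gauG.const_mul 2).integrableOn)
  · apply Measurable.aestronglyMeasurable
    apply Measurable.mul (by unfold gauG; measurability)
    apply Measurable.sub measurable_const
    exact (measurable_const.div (measurable_id.pow_const 8))
  · rw [ae_restrict_iff' measurableSet_Ioi]
    filter_upwards with y hy
    have hy2 : (2:ℝ) ≤ y := le_trans hl (le_of_lt hy)
    have hy0 : (0:ℝ) < y := by linarith
    have h64 : (256:ℝ) ≤ y^8 := by
      calc (256:ℝ) = 2^8 := by norm_num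
      _ ≤ y^8 := by gcongr
    have h15 : 105/y^8 ≤ 1 := by rw [div_le_one (by positivity)]; linarith
    have h0 : 0 ≤ 105/y^8 := by positivity
    rw [Real.norm_eq_abs, abs_mul, abs_of_nonneg (le_of_lt (gauG_pos y))]
    have : |1 - 105/y^8| ≤ 1 := by rw [abs_le]; constructor <;> linarith
    nlinarith [gauG_pos y]

lemma mills_upper {l : ℝ} (hl : 2 ≤ l) :
    ∫ y in Ioi l, gauG y ≤ gauG l * millsP l := by
  have hl0 : (0:ℝ) < l := by linarith
  have hderiv : ∀ x ∈ Ici l, HasDerivAt (fun y => -(gauG y * millsP y))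
      (gauG x * (1 + 15/x^6)) x := by
    intro x hx
    have hx0 : x ≠ 0 := by have := hx.out; intro h; rw [h] at this; linarith
    have h := ((hasDerivAt_gauG x).mul (hasDerivAt_millsP hx0)).neg
    refine h.congr_deriv ?_
    have hg := gauG_pos x
    simp only [millsP]
    field_simp
    ring
  have htend : Tendsto (fun y => -(gauG y * millsP y)) atTop (nhds 0) := by
    have := (tendsto_gauG.mul tendsto_millsP).neg
    simpa using this
  have key := integral_Ioi_of_hasDerivAt_of_tendsto' hderiv (integrableOn_upperDeriv hl) htend
  simp only [zero_sub, neg_neg] at key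
  rw [← key]
  apply setIntegral_mono_on integrable_gauG.integrableOn (integrableOn_upperDeriv hl)
    measurableSet_Ioi
  intro y hy
  have hy0 : (0:ℝ) < y := by have := hy.out; linarith
  have h0 : 0 < 15/y^6 := by positivity
  nlinarith [gauG_pos y]

lemma mills_lower {l : ℝ} (hl : 2 ≤ l) :
    gauG l * millsQ l ≤ ∫ y in Ioi l, gauG y := by
  have hl0 : (0:ℝ) < l := by linarith
  have hderiv : ∀ x ∈ Ici l, HasDerivAt (fun y => -(gauG y * millsQ y))
      (gauG x * (1 - 105/x^8)) x := by
    intro x hx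
    have hx0 : x ≠ 0 := by have := hx.out; intro h; rw [h] at this; linarith
    have h := ((hasDerivAt_gauG x).mul (hasDerivAt_millsQ hx0)).neg
    refine h.congr_deriv ?_
    simp only [millsQ]
    field_simp
    ring
  have htend : Tendsto (fun y => -(gauG y * millsQ y)) atTop (nhds 0) := by
    have := (tendsto_gauG.mul tendsto_millsQ).neg
    simpa using this
  have key := integral_Ioi_of_hasDerivAt_of_tendsto' hderiv (integrableOn_lowerDeriv hl) htend
  simp only [zero_sub, neg_neg] at key
  rw [← key]
  apply setIntegral_mono_on (integrableOn_lowerDeriv hl) integrable_gauG.integrableOn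
    measurableSet_Ioi
  intro y hy
  have hy0 : (0:ℝ) < y := by have := hy.out; linarith
  have h0 : 0 < 105/y^8 := by positivity
  nlinarith [gauG_pos y]

lemma millsP_eq {l : ℝ} (hl : l ≠ 0) : millsP l = (l^4 - l^2 + 3)/l^5 := by
  simp only [millsP]; field_simp

lemma millsQ_eq {l : ℝ} (hl : l ≠ 0) : millsQ l = (l^6 - l^4 + 3*l^2 - 15)/l^7 := by
  simp only [millsQ]; field_simp

lemma millsP_num_pos (l : ℝ) : 0 < l^4 - l^2 + 3 := by nlinarith [sq_nonneg (l^2 - 1/2)]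

lemma millsQ_num_pos {l : ℝ} (hl : 2 ≤ l) : 0 < l^6 - l^4 + 3*l^2 - 15 := by
  have h4 : 4 ≤ l^2 := by nlinarith
  have h16 : 16 ≤ l^4 := by nlinarith
  have h6 : l^4 * 4 ≤ l^6 := by nlinarith
  linarith

lemma millsQ_pos {l : ℝ} (hl : 2 ≤ l) : 0 < millsQ l := by
  have hl0 : (0:ℝ) < l := by linarith
  rw [millsQ_eq (ne_of_gt hl0)]
  exact div_pos (millsQ_num_pos hl) (by positivity)

lemma millsP_pos {l : ℝ} (hl : 2 ≤ l) : 0 < millsP l := by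
  have hl0 : (0:ℝ) < l := by linarith
  rw [millsP_eq (ne_of_gt hl0)]
  exact div_pos (millsP_num_pos l) (by positivity)

lemma millsP_le {l : ℝ} (hl : 2 ≤ l) : millsP l ≤ 1/l := by
  have hl0 : (0:ℝ) < l := by linarith
  have h3 : (3:ℝ) ≤ l^2 := by nlinarith
  have key : 3/l^5 ≤ 1/l^3 := by
    rw [div_le_div_iff₀ (by positivity) (by positivity)]
    nlinarith [pow_pos hl0 3]
  simp only [millsP]; linarith

lemma tendsto_upF : Tendsto upF atTop (nhds 1) := by
  set F : ℝ → ℝ := fun u => (1 + 7*u^2 - 6*u^4 + 9*u^6)/((1 - u^2 + 3*u^4)^2) with hF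
  have hc : ContinuousAt F 0 := by
    apply ContinuousAt.div (by fun_prop) (by fun_prop) (by norm_num)
  have hi : Tendsto (fun l : ℝ => l⁻¹) atTop (nhds 0) := tendsto_inv_atTop_zero
  have h := hc.tendsto.comp hi
  have hF0 : F 0 = 1 := by norm_num [hF]
  rw [hF0] at h
  apply h.congr'
  filter_upwards [eventually_ge_atTop (2:ℝ)] with l hl
  have hl0 : (0:ℝ) < l := by linarith
  have hl0' : l ≠ 0 := ne_of_gt hl0
  have hnum := millsP_num_pos l
  have hnum' : l^4 - l^2 + 3 ≠ 0 := ne_of_gt hnum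
  show F l⁻¹ = upF l
  rw [hF]
  have e1 : 1 - l⁻¹^2 + 3*l⁻¹^4 = (l^4 - l^2 + 3)/l^4 := by field_simp
  have e2 : 1 + 7*l⁻¹^2 - 6*l⁻¹^4 + 9*l⁻¹^6 = (l^6 + 7*l^4 - 6*l^2 + 9)/l^6 := by
    field_simp
  simp only [e1, e2, upF, millsP_eq hl0', inv_div, div_pow]
  rw [div_div_div_eq]
  set D := l^4 - l^2 + 3 with hD
  field_simp
  rw [hD]
  ring

lemma tendsto_loF : Tendsto loF atTop (nhds 1) := by
  set F : ℝ → ℝ := fun u =>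
    (1 - 8*u^2 - 36*u^4 + 39*u^6 - 90*u^8 + 225*u^10)/((1 - u^2 + 3*u^4 - 15*u^6)^2) with hF
  have hc : ContinuousAt F 0 := by
    apply ContinuousAt.div (by fun_prop) (by fun_prop) (by norm_num)
  have hi : Tendsto (fun l : ℝ => l⁻¹) atTop (nhds 0) := tendsto_inv_atTop_zero
  have h := hc.tendsto.comp hi
  have hF0 : F 0 = 1 := by norm_num [hF]
  rw [hF0] at h
  apply h.congr'
  filter_upwards [eventually_ge_atTop (2:ℝ)] with l hl
  have hl0 : (0:ℝ) < l := by linarith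
  have hl0' : l ≠ 0 := ne_of_gt hl0
  have hnum := millsQ_num_pos hl
  have hnum' : l^6 - l^4 + 3*l^2 - 15 ≠ 0 := ne_of_gt hnum
  show F l⁻¹ = loF l
  rw [hF]
  have e1 : 1 - l⁻¹^2 + 3*l⁻¹^4 - 15*l⁻¹^6 = (l^6 - l^4 + 3*l^2 - 15)/l^6 := by
    field_simp
  have e2 : 1 - 8*l⁻¹^2 - 36*l⁻¹^4 + 39*l⁻¹^6 - 90*l⁻¹^8 + 225*l⁻¹^10
      = (l^10 - 8*l^8 - 36*l^6 + 39*l^4 - 90*l^2 + 225)/l^10 := by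
    field_simp
  simp only [e1, e2, loF, millsQ_eq hl0', inv_div, div_pow]
  rw [div_div_div_eq]
  set D := l^6 - l^4 + 3*l^2 - 15 with hD
  field_simp
  rw [hD]
  ring

lemma f_mono {l r s : ℝ} (h0 : 0 ≤ l) (h1 : l ≤ r) (h2 : r ≤ s) :
    l^2*(1 + l*s - s^2) ≤ l^2*(1 + l*r - r^2) := by
  nlinarith [mul_nonneg (mul_nonneg (sq_nonneg l) (sub_nonneg.2 h2))
    (show (0:ℝ) ≤ r + s - l by linarith)]

lemma main_bound {l : ℝ} (hl : 2 ≤ l) :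
    loF l ≤ l ^ 2 *
          ((∫ y in Set.Ioi l, (y - l) ^ 2 * gaussianPDFReal 0 1 y) /
              (∫ y in Set.Ioi l, gaussianPDFReal 0 1 y) -
            ((∫ y in Set.Ioi l, (y - l) * gaussianPDFReal 0 1 y) /
              ∫ y in Set.Ioi l, gaussianPDFReal 0 1 y) ^ 2) ∧
    l ^ 2 *
          ((∫ y in Set.Ioi l, (y - l) ^ 2 * gaussianPDFReal 0 1 y) /
              (∫ y in Set.Ioi l, gaussianPDFReal 0 1 y) -
            ((∫ y in Set.Ioi l, (y - l) * gaussianPDFReal 0 1 y) /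
              ∫ y in Set.Ioi l, gaussianPDFReal 0 1 y) ^ 2) ≤ upF l := by
  have hl0 : (0:ℝ) < l := by linarith
  set c : ℝ := (Real.sqrt (2 * Real.pi))⁻¹ with hc
  have hcpos : 0 < c := by
    rw [hc]; positivity
  set A : ℝ := ∫ y in Ioi l, gauG y with hA
  set B : ℝ := gauG l with hB
  have hBpos : 0 < B := gauG_pos l
  have hQpos := millsQ_pos hl
  have hPpos := millsP_pos hl
  have hApos : 0 < A := lt_of_lt_of_le (mul_pos hBpos hQpos) (mills_lower hl)
  have e0 : ∫ y in Ioi l, gaussianPDFReal 0 1 y = c * A := by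
    rw [hA, pdf_eq, ← integral_const_mul]
  have e1 : ∫ y in Ioi l, (y - l) * gaussianPDFReal 0 1 y = c * (B - l * A) := by
    rw [pdf_eq, ← hc]
    have : ∀ y : ℝ, (y - l) * (c * gauG y) = c * (y * gauG y) - (c * l) * gauG y :=
      fun y => by ring
    simp_rw [this]
    rw [integral_sub ((integrable_mul_gauG.const_mul c).integrableOn)
      ((integrable_gauG.const_mul (c * l)).integrableOn),
      integral_const_mul, integral_const_mul, integral_mul_gauG]
    rw [hA, hB]; ring
  have e2 : ∫ y in Ioi l, (y - l) ^ 2 * gaussianPDFReal 0 1 y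
      = c * ((1 + l^2) * A - l * B) := by
    rw [pdf_eq, ← hc]
    have : ∀ y : ℝ, (y - l) ^ 2 * (c * gauG y)
        = c * (y ^ 2 * gauG y) - (2 * l * c) * (y * gauG y) + (c * l ^ 2) * gauG y :=
      fun y => by ring
    simp_rw [this]
    have isub : Integrable (fun y : ℝ =>
        c * (y ^ 2 * gauG y) - (2 * l * c) * (y * gauG y)) := by
      exact (integrable_sq_gauG.const_mul c).sub (integrable_mul_gauG.const_mul (2 * l * c))
    rw [integral_add isub.integrableOn ((integrable_gauG.const_mul (c * l ^ 2)).integrableOn),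
      integral_sub ((integrable_sq_gauG.const_mul c).integrableOn)
        ((integrable_mul_gauG.const_mul (2 * l * c)).integrableOn),
      integral_const_mul, integral_const_mul, integral_const_mul,
      integral_mul_gauG, integral_sq_gauG]
    rw [hA, hB]; ring
  rw [e0, e1, e2]
  have hr : c * ((1 + l^2) * A - l * B) / (c * A) - (c * (B - l * A) / (c * A)) ^ 2
      = 1 + l * (B/A) - (B/A)^2 := by
    field_simp
    ring
  rw [hr]
  -- bounds on r := B/A
  have hup : A ≤ B * millsP l := mills_upper hl
  have hlow : B * millsQ l ≤ A := mills_lower hl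
  have hr2 : (millsP l)⁻¹ ≤ B/A := by
    rw [le_div_iff₀ hApos]
    calc (millsP l)⁻¹ * A ≤ (millsP l)⁻¹ * (B * millsP l) :=
      mul_le_mul_of_nonneg_left hup (by positivity)
    _ = B := by field_simp
  have hr3 : B/A ≤ (millsQ l)⁻¹ := by
    rw [div_le_iff₀ hApos]
    calc B = B * millsQ l * (millsQ l)⁻¹ := by field_simp
    _ ≤ A * (millsQ l)⁻¹ := mul_le_mul_of_nonneg_right hlow (by positivity)
    _ = (millsQ l)⁻¹ * A := mul_comm _ _
  have hr1 : l ≤ (millsP l)⁻¹ := by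
    have h := one_div_le_one_div_of_le hPpos (millsP_le hl)
    rwa [one_div_one_div, one_div] at h
  constructor
  · exact f_mono (le_of_lt hl0) (le_trans hr1 hr2) hr3
  · exact f_mono (le_of_lt hl0) hr1 hr2

theorem gaussian_conditional_overshoot_variance :
    Tendsto (fun l : ℝ =>
        l ^ 2 *
          ((∫ y in Set.Ioi l, (y - l) ^ 2 * gaussianPDFReal 0 1 y) /
              (∫ y in Set.Ioi l, gaussianPDFReal 0 1 y) -
            ((∫ y in Set.Ioi l, (y - l) * gaussianPDFReal 0 1 y) /
              ∫ y in Set.Ioi l, gaussianPDFReal 0 1 y) ^ 2))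
      atTop (nhds 1) := by
  refine tendsto_of_tendsto_of_tendsto_of_le_of_le' tendsto_loF tendsto_upF ?_ ?_
  · filter_upwards [eventually_ge_atTop (2:ℝ)] with l hl
    exact (main_bound hl).1
  · filter_upwards [eventually_ge_atTop (2:ℝ)] with l hl
    exact (main_bound hl).2
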